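/- For finite measures η, χ on ℝ with finite first moments having equal total mass and equal first moment, η is smaller than χ in convex order (∫f dη ≤ ∫f dχ for all convex f : ℝ → ℝ) if and only if P_η(k) ≤ P_χ(k) for all k ∈ ℝ. -/

import Mathlib

open MeasureTheory Set Filter

noncomputable def pot (eta : Measure ℝ) (k : ℝ) : ℝ := ∫ x, max (k - x) 0 ∂eta

noncomputable def cpot (eta : Measure ℝ) (k : ℝ) : ℝ := ∫ x, max (x - k) 0 ∂eta

/-- `c` is the convex hull (largest convex minorant) of `f`. -/
def IsConvexHull (f c : ℝ → ℝ) : Prop :=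
  ConvexOn ℝ Set.univ c ∧ (∀ x, c x ≤ f x) ∧
    ∀ g : ℝ → ℝ, ConvexOn ℝ Set.univ g → (∀ x, g x ≤ f x) → ∀ x, g x ≤ c x

/-- Convex order: `∫ f dη ≤ ∫ f dχ` for all convex `f` for which both integrals exist. -/
def Cx (eta chi : Measure ℝ) : Prop :=
  ∀ f : ℝ → ℝ, ConvexOn ℝ Set.univ f → Integrable f eta → Integrable f chi →
    ∫ x, f x ∂eta ≤ ∫ x, f x ∂chi

/-- Extended convex order: `∫ f dη ≤ ∫ f dχ` for all nonnegative convex `f`. -/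
def ECx (eta chi : Measure ℝ) : Prop :=
  ∀ f : ℝ → ℝ, ConvexOn ℝ Set.univ f → (∀ x, 0 ≤ f x) →
    ∫⁻ x, ENNReal.ofReal (f x) ∂eta ≤ ∫⁻ x, ENNReal.ofReal (f x) ∂chi

/-- The class `𝒟(a, b)`: nonnegative, nondecreasing, convex functions vanishing at `-∞`
and asymptotic to `a * z - b` at `+∞`. -/
def MemD (a b : ℝ) (f : ℝ → ℝ) : Prop :=
  ConvexOn ℝ Set.univ f ∧ Monotone f ∧ (∀ x, 0 ≤ f x) ∧
    Tendsto f atBot (nhds 0) ∧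
    Tendsto (fun z => f z - (a * z - b)) atTop (nhds 0)

/-- `S` is the shadow of `μ` in `ν`. -/
def IsShadow (mu nu S : Measure ℝ) : Prop :=
  Cx mu S ∧ S ≤ nu ∧ ∀ eta : Measure ℝ, Cx mu eta → eta ≤ nu → Cx S eta

/-- `T` is the counter-shadow of `μ` in `ν`. -/
def IsCounterShadow (mu nu T : Measure ℝ) : Prop :=
  Cx mu T ∧ T ≤ nu ∧ ∀ eta : Measure ℝ, Cx mu eta → eta ≤ nu → Cx eta T

namespace Stmt7Aux

/-! ### Slope API for convex functions -/

noncomputable def sl (f : ℝ → ℝ) (u v : ℝ) : ℝ := (f v - f u) / (v - u)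

lemma sl_comm (f : ℝ → ℝ) (u v : ℝ) : sl f u v = sl f v u := by
  unfold sl
  rw [← neg_div_neg_eq]
  ring_nf

lemma sl_affine {σ β : ℝ} {u v : ℝ} (hu : u ≠ v) : sl (fun x => σ * x + β) u v = σ := by
  unfold sl
  rw [div_eq_iff (sub_ne_zero.2 hu.symm)]
  ring

lemma sl_of_affine {f : ℝ → ℝ} {σ β c d u v : ℝ} (h : ∀ x, c ≤ x → x ≤ d → f x = σ * x + β)
    (hu : c ≤ u) (hv : v ≤ d) (huv : u < v) : sl f u v = σ := by
  unfold sl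
  rw [h u hu (le_trans huv.le hv), h v (le_trans hu huv.le) hv,
    div_eq_iff (sub_ne_zero.2 huv.ne')]
  ring

lemma sl_mono {f : ℝ → ℝ} (hf : ConvexOn ℝ Set.univ f) {u v u' v' : ℝ}
    (h1 : u < v) (h2 : u' < v') (hu : u ≤ u') (hv : v ≤ v') : sl f u v ≤ sl f u' v' := by
  have step1 : sl f u v ≤ sl f u v' :=
    hf.secant_mono (mem_univ u) (mem_univ v) (mem_univ v') h1.ne' (lt_of_lt_of_le h1 hv).ne' hv
  have step2 : sl f u v' ≤ sl f u' v' := by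
    rw [sl_comm f u v', sl_comm f u' v']
    exact hf.secant_mono (mem_univ v') (mem_univ u) (mem_univ u')
      (lt_of_lt_of_le h1 hv).ne h2.ne hu
  linarith

/-- value identity: `f v = f u + sl f u v * (v - u)` -/
lemma sl_eval {f : ℝ → ℝ} {u v : ℝ} (h : u ≠ v) : f v = f u + sl f u v * (v - u) := by
  unfold sl
  have : v - u ≠ 0 := sub_ne_zero.2 (Ne.symm h)
  field_simp
  ring

/-! ### Right derivative -/

noncomputable def rd (f : ℝ → ℝ) (t : ℝ) : ℝ := ⨅ y : Set.Ioi t, sl f t y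

lemma rd_bddBelow {f : ℝ → ℝ} (hf : ConvexOn ℝ Set.univ f) (t : ℝ) :
    BddBelow (Set.range fun y : Set.Ioi t => sl f t (y : ℝ)) := by
  refine ⟨sl f (t - 1) t, ?_⟩
  rintro z ⟨⟨y, hy⟩, rfl⟩
  exact sl_mono hf (by linarith) hy (by linarith) (le_of_lt hy)

lemma rd_le_sl {f : ℝ → ℝ} (hf : ConvexOn ℝ Set.univ f) {t y : ℝ} (hy : t < y) :
    rd f t ≤ sl f t y :=
  ciInf_le (rd_bddBelow hf t) ⟨y, hy⟩

lemma sl_le_rd {f : ℝ → ℝ} (hf : ConvexOn ℝ Set.univ f) {x t : ℝ} (hx : x < t) :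
    sl f x t ≤ rd f t :=
  le_ciInf fun ⟨y, hy⟩ => sl_mono hf hx hy hx.le (le_of_lt hy)

lemma rd_mono {f : ℝ → ℝ} (hf : ConvexOn ℝ Set.univ f) {s t : ℝ} (h : s ≤ t) :
    rd f s ≤ rd f t := by
  rcases eq_or_lt_of_le h with rfl | h
  · exact le_rfl
  · exact (rd_le_sl hf h).trans (sl_le_rd hf h)

/-- The support line at `t` lies below `f`. -/
lemma supp_le {f : ℝ → ℝ} (hf : ConvexOn ℝ Set.univ f) (t x : ℝ) :
    f t + rd f t * (x - t) ≤ f x := by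
  rcases lt_trichotomy x t with h | rfl | h
  · have h1 : sl f x t ≤ rd f t := sl_le_rd hf h
    have h2 : f t = f x + sl f x t * (t - x) := sl_eval h.ne
    nlinarith
  · simp
  · have h1 : rd f t ≤ sl f t x := rd_le_sl hf h
    have h2 : f x = f t + sl f t x * (x - t) := sl_eval h.ne
    nlinarith

/-! ### Integrability helpers -/

variable {mu : Measure ℝ} [IsFiniteMeasure mu]

lemma integrable_affine (hid : Integrable (fun x => x) mu) (a b : ℝ) :
    Integrable (fun x => a + b * x) mu :=
  (integrable_const a).add (hid.const_mul b)

lemma integrable_call (hid : Integrable (fun x => x) mu) (k : ℝ) :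
    Integrable (fun x => max (x - k) 0) mu :=
  (hid.sub (integrable_const k)).pos_part

lemma integrable_put (hid : Integrable (fun x => x) mu) (k : ℝ) :
    Integrable (fun x => max (k - x) 0) mu :=
  ((integrable_const k).sub hid).pos_part

lemma cpot_eq (hid : Integrable (fun x => x) mu) (k : ℝ) :
    cpot mu k = (∫ x, x ∂mu) - k * (mu Set.univ).toReal + pot mu k := by
  unfold cpot pot
  have hpt : ∀ x : ℝ, max (x - k) 0 = (x - k) + max (k - x) 0 := by
    intro x
    rcases le_total k x with h | h
    · rw [max_eq_left (by linarith), max_eq_right (by linarith)]; ring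
    · rw [max_eq_right (by linarith), max_eq_left (by linarith)]; ring
  simp_rw [hpt]
  have h1 : Integrable (fun x : ℝ => x - k) mu := hid.sub (integrable_const k)
  rw [integral_add h1 (integrable_put hid k),
    integral_sub hid (integrable_const k), integral_const]
  simp [smul_eq_mul]
  rw [measureReal_def]
  ring

/-! ### Piecewise linear functions: affine + positive combination of calls -/

lemma pwl_integral (hid : Integrable (fun x => x) mu) (a b : ℝ) (m : ℕ) (c k : ℕ → ℝ) :
    ∫ x, (a + b * x + ∑ i ∈ Finset.range m, c i * max (x - k i) 0) ∂mu
      = a * (mu Set.univ).toReal + b * ∫ x, x ∂mu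
        + ∑ i ∈ Finset.range m, c i * cpot mu (k i) := by
  have hint1 : Integrable (fun x => a + b * x) mu := integrable_affine hid a b
  have hint2 : ∀ i ∈ Finset.range m,
      Integrable (fun x => c i * max (x - k i) 0) mu :=
    fun i _ => (integrable_call hid (k i)).const_mul (c i)
  rw [integral_add hint1 (integrable_finset_sum _ hint2), integral_add (integrable_const a)
    (hid.const_mul b), integral_finset_sum _ hint2, integral_const]
  simp_rw [integral_const_mul]
  simp only [smul_eq_mul, cpot, measureReal_def]
  rw [integral_const_mul]
  ring

lemma pwl_le (eta chi : Measure ℝ) [IsFiniteMeasure eta] [IsFiniteMeasure chi]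
    (hide : Integrable (fun x => x) eta) (hidc : Integrable (fun x => x) chi)
    (hmass : (eta Set.univ).toReal = (chi Set.univ).toReal)
    (hmean : ∫ x, x ∂eta = ∫ x, x ∂chi)
    (hcpot : ∀ k, cpot eta k ≤ cpot chi k)
    (a b : ℝ) (m : ℕ) (c k : ℕ → ℝ) (hc : ∀ i, 0 ≤ c i) :
    ∫ x, (a + b * x + ∑ i ∈ Finset.range m, c i * max (x - k i) 0) ∂eta
      ≤ ∫ x, (a + b * x + ∑ i ∈ Finset.range m, c i * max (x - k i) 0) ∂chi := by
  rw [pwl_integral hide, pwl_integral hidc, hmass, hmean]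
  gcongr
  · exact hc _
  · exact hcpot _


/-! ### Stage 2: convex functions that are affine outside a compact interval -/

lemma stage2 (eta chi : Measure ℝ) [IsFiniteMeasure eta] [IsFiniteMeasure chi]
    (hide : Integrable (fun x => x) eta) (hidc : Integrable (fun x => x) chi)
    (hmassR : (eta Set.univ).toReal = (chi Set.univ).toReal)
    (hmean : ∫ x, x ∂eta = ∫ x, x ∂chi)
    (hcpot : ∀ k, cpot eta k ≤ cpot chi k)
    {f : ℝ → ℝ} (hf : ConvexOn ℝ Set.univ f)
    (hfe : Integrable f eta) (hfc : Integrable f chi)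
    {c d σm βm σp βp : ℝ}
    (hL : ∀ x, x ≤ c → f x = σm * x + βm)
    (hR : ∀ x, d ≤ x → f x = σp * x + βp) :
    ∫ x, f x ∂eta ≤ ∫ x, f x ∂chi := by
  classical
  refine le_of_forall_pos_le_add fun ε hε => ?_
  have hmassnn : (0:ℝ) ≤ (chi Set.univ).toReal := ENNReal.toReal_nonneg
  obtain ⟨ε', hε'def⟩ : ∃ e : ℝ, e = ε / ((chi Set.univ).toReal + 1) := ⟨_, rfl⟩
  have hε' : 0 < ε' := hε'def ▸ div_pos hε (by linarith)
  obtain ⟨K, hKdef⟩ : ∃ k : ℝ, k = max |σm| |σp| := ⟨_, rfl⟩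
  have hK0 : (0:ℝ) ≤ K := hKdef ▸ le_trans (abs_nonneg σm) (le_max_left _ _)
  have hKm : -K ≤ σm := by
    have h1 : |σm| ≤ K := hKdef ▸ le_max_left _ _
    linarith [neg_abs_le σm]
  have hKp : σp ≤ K := hKdef ▸ le_trans (le_abs_self σp) (le_max_right _ _)
  obtain ⟨δ, hδdef⟩ : ∃ dd : ℝ, dd = min 1 (ε' / (2 * K + 1)) := ⟨_, rfl⟩
  have hδ0 : 0 < δ := hδdef ▸ lt_min one_pos (div_pos hε' (by linarith))
  have hδ1 : δ ≤ 1 := hδdef ▸ min_le_left _ _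
  have hδε : (2 * K + 1) * δ ≤ ε' := by
    have h2 : δ ≤ ε' / (2 * K + 1) := hδdef ▸ min_le_right _ _
    rw [le_div_iff₀ (by linarith : (0:ℝ) < 2 * K + 1)] at h2
    linarith
  -- the grid
  obtain ⟨M, hMdef⟩ : ∃ m : ℕ, m = Nat.ceil ((d - c) / δ) + 1 := ⟨_, rfl⟩
  obtain ⟨a, hadef⟩ : ∃ a : ℕ → ℝ, a = fun j : ℕ => c - δ + (j:ℝ) * δ := ⟨_, rfl⟩
  have ha_step : ∀ j : ℕ, a (j + 1) = a j + δ := by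
    intro j; simp only [hadef]; push_cast; ring
  have ha_lt : ∀ j : ℕ, a j < a (j + 1) := fun j => by rw [ha_step]; linarith
  have ha_mono : ∀ i j : ℕ, i ≤ j → a i ≤ a j := by
    intro i j hij
    simp only [hadef]
    have : (i:ℝ) ≤ (j:ℝ) := Nat.cast_le.2 hij
    nlinarith
  have ha0 : a 0 = c - δ := by simp [hadef]
  have ha1 : a 1 = c := by simp [hadef]
  have haM : d ≤ a M := by
    have h := Nat.le_ceil ((d - c) / δ)
    have h2 : d - c ≤ (Nat.ceil ((d - c) / δ) : ℝ) * δ := (div_le_iff₀ hδ0).1 h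
    simp only [hadef, hMdef]
    push_cast
    linarith
  have hca : c - 1 ≤ a 0 := by rw [ha0]; linarith
  -- slopes
  obtain ⟨s, hsdef⟩ : ∃ s : ℕ → ℝ, s = fun j => (f (a (j + 1)) - f (a j)) / δ := ⟨_, rfl⟩
  have hs_sl : ∀ j, s j = sl f (a j) (a (j + 1)) := by
    intro j
    unfold sl
    rw [show a (j + 1) - a j = δ by rw [ha_step]; ring, hsdef]
  have hs_mono : ∀ i j : ℕ, i ≤ j → s i ≤ s j := by
    intro i j hij
    rw [hs_sl, hs_sl]
    exact sl_mono hf (ha_lt i) (ha_lt j) (ha_mono _ _ hij)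
      (ha_mono _ _ (Nat.succ_le_succ hij))
  -- general slope bounds
  have hslm : ∀ u v : ℝ, u < v → c - 1 ≤ u → σm ≤ sl f u v := by
    intro u v huv hu
    have e1 : sl f (c - 2) (c - 1) = σm := by
      unfold sl
      rw [hL (c-2) (by linarith), hL (c-1) (by linarith),
        div_eq_iff (by norm_num : (c-1) - (c-2) ≠ (0:ℝ))]
      ring
    calc σm = sl f (c-2) (c-1) := e1.symm
      _ ≤ sl f u v := sl_mono hf (by linarith) huv (by linarith) (by linarith)
  have hslp : ∀ u v : ℝ, u < v → sl f u v ≤ σp := by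
    intro u v huv
    have hvw : v ≤ max v d := le_max_left _ _
    have hdw : d ≤ max v d := le_max_right _ _
    have e1 : sl f (max v d) (max v d + 1) = σp := by
      unfold sl
      rw [hR (max v d) hdw, hR (max v d + 1) (by linarith),
        div_eq_iff (by norm_num : max v d + 1 - max v d ≠ (0:ℝ))]
      ring
    calc sl f u v ≤ sl f (max v d) (max v d + 1) :=
          sl_mono hf huv (by linarith) (by linarith) (by linarith)
      _ = σp := e1
  have hs0 : s 0 = σm := by
    have h01 : a (0 + 1) = a 1 := by norm_num
    rw [hsdef]
    simp only [h01]
    rw [ha1, ha0, hL c le_rfl, hL (c - δ) (by linarith), div_eq_iff hδ0.ne']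
    ring
  have hsM : s M = σp := by
    have hd2 : d ≤ a (M + 1) := le_trans haM (ha_mono M (M+1) (Nat.le_succ M))
    rw [hsdef]
    simp only []
    rw [hR (a (M+1)) hd2, hR (a M) haM, ha_step M, div_eq_iff hδ0.ne']
    ring
  -- the piecewise linear approximation
  obtain ⟨cc, hccdef⟩ : ∃ cc : ℕ → ℝ, cc = fun i => s (i + 1) - s i := ⟨_, rfl⟩
  obtain ⟨kk, hkkdef⟩ : ∃ kk : ℕ → ℝ, kk = fun i => a (i + 1) := ⟨_, rfl⟩
  obtain ⟨G, hGdef⟩ : ∃ G : ℝ → ℝ, G = fun x =>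
      (f (a 0) - s 0 * a 0) + s 0 * x + ∑ i ∈ Finset.range M, cc i * max (x - kk i) 0 :=
    ⟨_, rfl⟩
  have hcc : ∀ i, 0 ≤ cc i := fun i =>
    hccdef ▸ sub_nonneg.2 (hs_mono i (i+1) (Nat.le_succ i))
  obtain ⟨T, hTdef⟩ : ∃ T : ℕ → ℝ → ℝ, T = fun j x => f (a j) + s j * (x - a j) := ⟨_, rfl⟩
  have hfa_step : ∀ j : ℕ, f (a (j + 1)) = f (a j) + s j * δ := by
    intro j
    rw [hsdef]
    field_simp
    ring
  have hTsum : ∀ (j : ℕ) (x : ℝ),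
      (f (a 0) - s 0 * a 0) + s 0 * x + ∑ i ∈ Finset.range j, cc i * (x - a (i + 1))
        = T j x := by
    intro j
    induction j with
    | zero => intro x; simp only [Finset.range_zero, Finset.sum_empty, add_zero, hTdef]; ring
    | succ j ih =>
      intro x
      rw [Finset.sum_range_succ, ← add_assoc, ih x]
      simp only [hTdef, hccdef]
      rw [hfa_step j, ha_step j]
      ring
  have hGval : ∀ (x : ℝ) (j : ℕ), j ≤ M → (a j ≤ x ∨ j = 0) → (x ≤ a (j + 1) ∨ j = M) →
      G x = T j x := by
    intro x j hjM hlow hhigh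
    have hsplit := Finset.sum_range_add_sum_Ico
      (fun i => cc i * max (x - kk i) 0) hjM
    beta_reduce at hsplit
    have h1 : ∑ i ∈ Finset.range j, cc i * max (x - kk i) 0
        = ∑ i ∈ Finset.range j, cc i * (x - a (i + 1)) := by
      refine Finset.sum_congr rfl fun i hi => ?_
      have hij : i < j := Finset.mem_range.1 hi
      have hajx : a j ≤ x := by
        rcases hlow with h | h
        · exact h
        · omega
      have hax : a (i + 1) ≤ x := le_trans (ha_mono _ _ hij) hajx
      rw [hkkdef]
      rw [max_eq_left (by linarith)]
    have h2 : ∑ i ∈ Finset.Ico j M, cc i * max (x - kk i) 0 = 0 := by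
      refine Finset.sum_eq_zero fun i hi => ?_
      obtain ⟨hji, hiM⟩ := Finset.mem_Ico.1 hi
      have hxj1 : x ≤ a (j + 1) := by
        rcases hhigh with h | h
        · exact h
        · omega
      have hxa : x ≤ a (i + 1) := le_trans hxj1 (ha_mono _ _ (Nat.succ_le_succ hji))
      rw [hkkdef]
      rw [max_eq_right (by linarith), mul_zero]
    have hGx : G x = (f (a 0) - s 0 * a 0) + s 0 * x
        + ∑ i ∈ Finset.range j, cc i * (x - a (i + 1)) := by
      simp only [hGdef]
      rw [← hsplit, h1, h2, add_zero]
    rw [hGx, hTsum]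
  -- coverage
  have hM1 : 1 ≤ M := by omega
  have hcases : ∀ x : ℝ, x ≤ a 0 ∨ a M ≤ x ∨ ∃ j, j < M ∧ a j ≤ x ∧ x ≤ a (j + 1) := by
    intro x
    by_cases h0 : x ≤ a 0
    · exact Or.inl h0
    by_cases hMx : a M ≤ x
    · exact Or.inr (Or.inl hMx)
    push_neg at h0 hMx
    refine Or.inr (Or.inr ?_)
    have hex : ∃ i, x < a i := ⟨M, hMx⟩
    have hn_spec : x < a (Nat.find hex) := Nat.find_spec hex
    have hnM : Nat.find hex ≤ M := Nat.find_min' hex hMx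
    have hn0 : Nat.find hex ≠ 0 := by
      intro h
      rw [h] at hn_spec
      exact absurd hn_spec (not_lt.2 h0.le)
    refine ⟨Nat.find hex - 1, by omega, ?_, ?_⟩
    · have hlt : Nat.find hex - 1 < Nat.find hex := by omega
      exact not_lt.1 (Nat.find_min hex hlt)
    · have hsucc : Nat.find hex - 1 + 1 = Nat.find hex := by omega
      rw [hsucc]
      exact hn_spec.le
  -- the two inequalities
  have hfG : ∀ x : ℝ, f x ≤ G x ∧ G x ≤ f x + ε' := by
    intro x
    rcases hcases x with hx | hx | ⟨j, hjM, hjx, hxj⟩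
    · have hGx : G x = T 0 x :=
        hGval x 0 (Nat.zero_le _) (Or.inr rfl) (Or.inl (le_trans hx (ha_mono 0 1 zero_le_one)))
      have hTx : T 0 x = f x := by
        have hfx : f x = σm * x + βm := hL x (by rw [ha0] at hx; linarith)
        have hfa0 : f (a 0) = σm * a 0 + βm := hL (a 0) (by rw [ha0]; linarith)
        simp only [hTdef, hs0]
        rw [hfa0, hfx]
        ring
      rw [hGx, hTx]
      exact ⟨le_refl _, by linarith⟩
    · have hGx : G x = T M x := hGval x M le_rfl (Or.inl hx) (Or.inr rfl)
      have hTx : T M x = f x := by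
        have hfx : f x = σp * x + βp := hR x (le_trans haM hx)
        have hfaM : f (a M) = σp * a M + βp := hR (a M) haM
        simp only [hTdef, hsM]
        rw [hfaM, hfx]
        ring
      rw [hGx, hTx]
      exact ⟨le_refl _, by linarith⟩
    · have hGx : G x = T j x := hGval x j hjM.le (Or.inl hjx) (Or.inl hxj)
      rw [hGx]
      simp only [hTdef]
      rcases eq_or_lt_of_le hjx with heq | hjx'
      · constructor
        · rw [← heq]
          simp
        · rw [← heq]
          simp
          linarith
      · have hxa : x - a j ≤ δ := by
          have h3 := hxj
          rw [ha_step] at h3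
          linarith
        have hsjb : s j ≤ σp := by rw [hs_sl]; exact hslp _ _ (ha_lt j)
        have hslx : sl f (a j) x ≤ s j := by
          rw [hs_sl]
          exact sl_mono hf hjx' (ha_lt j) le_rfl hxj
        have hslx2 : σm ≤ sl f (a j) x := by
          refine hslm _ _ hjx' ?_
          exact le_trans hca (ha_mono 0 j (Nat.zero_le j))
        have heval : f x = f (a j) + sl f (a j) x * (x - a j) := sl_eval hjx'.ne
        have hxap : (0:ℝ) ≤ x - a j := le_of_lt (sub_pos.2 hjx')
        constructor
        · have hm := mul_le_mul_of_nonneg_right hslx hxap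
          linarith
        · have h1 : f (a j) ≤ f x + K * δ := by
            have hp1 : (0:ℝ) ≤ (K + sl f (a j) x) * (x - a j) :=
              mul_nonneg (by linarith) hxap
            have hp2 : (0:ℝ) ≤ K * (δ - (x - a j)) := mul_nonneg hK0 (by linarith)
            have hexp : K * δ + sl f (a j) x * (x - a j)
                = (K + sl f (a j) x) * (x - a j) + K * (δ - (x - a j)) := by ring
            linarith
          have h2 : s j * (x - a j) ≤ K * δ := by
            have hp1 : (0:ℝ) ≤ (K - s j) * (x - a j) := mul_nonneg (by linarith) hxap
            have hp2 : (0:ℝ) ≤ K * (δ - (x - a j)) := mul_nonneg hK0 (by linarith)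
            have hexp : K * δ - s j * (x - a j)
                = (K - s j) * (x - a j) + K * (δ - (x - a j)) := by ring
            linarith
          linarith
  -- integrate
  have hGint_e : Integrable G eta := by
    rw [hGdef]
    have h1 : Integrable (fun x : ℝ => (f (a 0) - s 0 * a 0) + s 0 * x) eta :=
      integrable_affine hide _ _
    have h2 : Integrable
        (fun x : ℝ => ∑ i ∈ Finset.range M, cc i * max (x - kk i) 0) eta :=
      integrable_finset_sum _ fun i _ => (integrable_call hide (kk i)).const_mul (cc i)
    exact h1.add h2
  have hGint_c : Integrable G chi := by
    rw [hGdef]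
    have h1 : Integrable (fun x : ℝ => (f (a 0) - s 0 * a 0) + s 0 * x) chi :=
      integrable_affine hidc _ _
    have h2 : Integrable
        (fun x : ℝ => ∑ i ∈ Finset.range M, cc i * max (x - kk i) 0) chi :=
      integrable_finset_sum _ fun i _ => (integrable_call hidc (kk i)).const_mul (cc i)
    exact h1.add h2
  have step1 : ∫ x, f x ∂eta ≤ ∫ x, G x ∂eta :=
    integral_mono hfe hGint_e fun x => (hfG x).1
  have step2 : ∫ x, G x ∂eta ≤ ∫ x, G x ∂chi := by
    rw [hGdef]
    exact pwl_le eta chi hide hidc hmassR hmean hcpot _ _ M cc kk hcc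
  have step3 : ∫ x, G x ∂chi ≤ ∫ x, (f x + ε') ∂chi :=
    integral_mono hGint_c (hfc.add (integrable_const ε')) fun x => (hfG x).2
  have step4 : ∫ x, (f x + ε') ∂chi = ∫ x, f x ∂chi + ε' * (chi Set.univ).toReal := by
    rw [integral_add hfc (integrable_const ε'), integral_const]
    simp [smul_eq_mul, mul_comm, measureReal_def]
  have step5 : ε' * (chi Set.univ).toReal ≤ ε := by
    have h1 : ε' * (chi Set.univ).toReal ≤ ε' * ((chi Set.univ).toReal + 1) := by nlinarith
    have h2 : ε' * ((chi Set.univ).toReal + 1) = ε := by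
      rw [hε'def]
      field_simp
    linarith
  linarith

end Stmt7Aux

theorem stmt7 (eta chi : Measure ℝ) [IsFiniteMeasure eta] [IsFiniteMeasure chi]
    (hinte : Integrable (fun x => x) eta) (hintc : Integrable (fun x => x) chi)
    (hmass : eta Set.univ = chi Set.univ)
    (hmean : ∫ x, x ∂eta = ∫ x, x ∂chi) :
    Cx eta chi ↔ ∀ k, pot eta k ≤ pot chi k := by
  constructor
  · -- easy direction
    intro hCx k
    have h1 : ConvexOn ℝ Set.univ (fun x : ℝ => k - x) :=
      (convexOn_const k convex_univ).sub (concaveOn_id convex_univ)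
    have h2 : ConvexOn ℝ Set.univ (fun _ : ℝ => (0:ℝ)) := convexOn_const 0 convex_univ
    have hconv : ConvexOn ℝ Set.univ (fun x : ℝ => max (k - x) 0) := h1.sup h2
    exact hCx _ hconv (Stmt7Aux.integrable_put hinte k) (Stmt7Aux.integrable_put hintc k)
  · -- hard direction
    intro hpot f hf hfe hfc
    have hmassR : (eta Set.univ).toReal = (chi Set.univ).toReal := by rw [hmass]
    have hcpot : ∀ k, cpot eta k ≤ cpot chi k := by
      intro k
      rw [Stmt7Aux.cpot_eq hinte k, Stmt7Aux.cpot_eq hintc k, hmean, hmassR]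
      have := hpot k
      linarith
    -- approximating sequence: sup of support lines over [-n, n]
    obtain ⟨F, hFdef⟩ : ∃ F : ℕ → ℝ → ℝ, F = fun (n : ℕ) (x : ℝ) =>
        ⨆ t : Set.Icc (-(n:ℝ)) (n:ℝ), (f t + Stmt7Aux.rd f t * (x - t)) := ⟨_, rfl⟩
    have hLle : ∀ t x : ℝ, f t + Stmt7Aux.rd f t * (x - t) ≤ f x :=
      fun t x => Stmt7Aux.supp_le hf t x
    have hcast : ∀ n : ℕ, (0:ℝ) ≤ (n:ℝ) := fun n => Nat.cast_nonneg n
    have h0mem : ∀ n : ℕ, (0:ℝ) ∈ Set.Icc (-(n:ℝ)) (n:ℝ) := by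
      intro n
      rw [Set.mem_Icc]
      constructor <;> linarith [hcast n]
    have hne : ∀ n : ℕ, Nonempty (Set.Icc (-(n:ℝ)) (n:ℝ)) := fun n => ⟨⟨0, h0mem n⟩⟩
    have hbdd : ∀ (n : ℕ) (x : ℝ), BddAbove (Set.range fun t : Set.Icc (-(n:ℝ)) (n:ℝ) =>
        f t + Stmt7Aux.rd f t * (x - t)) := by
      intro n x
      refine ⟨f x, ?_⟩
      rintro z ⟨t, rfl⟩
      exact hLle t x
    have hFsup_le : ∀ (n : ℕ) (z C : ℝ),
        (∀ t : ℝ, t ∈ Set.Icc (-(n:ℝ)) (n:ℝ) → f t + Stmt7Aux.rd f t * (z - t) ≤ C) →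
        F n z ≤ C := by
      intro n z C h
      rw [hFdef]
      haveI := hne n
      exact ciSup_le fun t => h t t.2
    have hFle : ∀ (n : ℕ) (x : ℝ), F n x ≤ f x := by
      intro n x
      rw [hFdef]
      haveI := hne n
      exact ciSup_le fun t => hLle t x
    have hFge : ∀ (n : ℕ) (x t : ℝ) (ht : t ∈ Set.Icc (-(n:ℝ)) (n:ℝ)),
        f t + Stmt7Aux.rd f t * (x - t) ≤ F n x := by
      intro n x t ht
      rw [hFdef]
      exact le_ciSup (hbdd n x) ⟨t, ht⟩
    have hFeq : ∀ (n : ℕ) (x : ℝ), |x| ≤ (n:ℝ) → F n x = f x := by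
      intro n x hx
      refine le_antisymm (hFle n x) ?_
      have h := hFge n x x (abs_le.1 hx)
      simpa using h
    have hFtailR : ∀ (n : ℕ) (x : ℝ), (n:ℝ) ≤ x →
        F n x = f (n:ℝ) + Stmt7Aux.rd f (n:ℝ) * (x - (n:ℝ)) := by
      intro n x hx
      refine le_antisymm ?_ (hFge n x (n:ℝ) ⟨by linarith [hcast n], le_rfl⟩)
      refine hFsup_le n x _ fun t ht => ?_
      have h1 : f t + Stmt7Aux.rd f t * ((n:ℝ) - t) ≤ f (n:ℝ) := Stmt7Aux.supp_le hf t _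
      have h2 : Stmt7Aux.rd f t ≤ Stmt7Aux.rd f (n:ℝ) := Stmt7Aux.rd_mono hf ht.2
      have h3 : Stmt7Aux.rd f t * (x - (n:ℝ)) ≤ Stmt7Aux.rd f (n:ℝ) * (x - (n:ℝ)) :=
        mul_le_mul_of_nonneg_right h2 (by linarith)
      have h4 : Stmt7Aux.rd f t * (x - t)
          = Stmt7Aux.rd f t * ((n:ℝ) - t) + Stmt7Aux.rd f t * (x - (n:ℝ)) := by ring
      linarith
    have hFtailL : ∀ (n : ℕ) (x : ℝ), x ≤ -(n:ℝ) →
        F n x = f (-(n:ℝ)) + Stmt7Aux.rd f (-(n:ℝ)) * (x + (n:ℝ)) := by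
      intro n x hx
      refine le_antisymm ?_ ?_
      · refine hFsup_le n x _ fun t ht => ?_
        have h1 : f t + Stmt7Aux.rd f t * (-(n:ℝ) - t) ≤ f (-(n:ℝ)) := Stmt7Aux.supp_le hf t _
        have h2 : Stmt7Aux.rd f (-(n:ℝ)) ≤ Stmt7Aux.rd f t := Stmt7Aux.rd_mono hf ht.1
        have h3 : Stmt7Aux.rd f t * (x + (n:ℝ)) ≤ Stmt7Aux.rd f (-(n:ℝ)) * (x + (n:ℝ)) := by
          have hxn : x + (n:ℝ) ≤ 0 := by linarith
          exact mul_le_mul_of_nonpos_right h2 hxn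
        have h4 : Stmt7Aux.rd f t * (x - t)
            = Stmt7Aux.rd f t * (-(n:ℝ) - t) + Stmt7Aux.rd f t * (x + (n:ℝ)) := by ring
        linarith
      · have := hFge n x (-(n:ℝ)) ⟨le_rfl, by linarith [hcast n]⟩
        have heq : x - (-(n:ℝ)) = x + (n:ℝ) := by ring
        rw [heq] at this
        exact this
    have hFconv : ∀ n : ℕ, ConvexOn ℝ Set.univ (F n) := by
      intro n
      refine ⟨convex_univ, ?_⟩
      intro x _ y _ p q hp hq hpq
      simp only [smul_eq_mul]
      refine hFsup_le n _ _ fun t ht => ?_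
      have hx := hFge n x t ht
      have hy := hFge n y t ht
      have key : f t + Stmt7Aux.rd f t * ((p * x + q * y) - t)
          = p * (f t + Stmt7Aux.rd f t * (x - t)) + q * (f t + Stmt7Aux.rd f t * (y - t)) := by
        have : p = 1 - q := by linarith
        rw [this]
        ring
      rw [key]
      have hx' := mul_le_mul_of_nonneg_left hx hp
      have hy' := mul_le_mul_of_nonneg_left hy hq
      linarith
    have hFmono : ∀ x : ℝ, Monotone fun n : ℕ => F n x := by
      intro x n m hnm
      refine hFsup_le n x _ fun t ht => ?_
      refine hFge m x t ⟨?_, ?_⟩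
      · refine le_trans ?_ ht.1
        simp only [neg_le_neg_iff]
        exact_mod_cast hnm
      · exact le_trans ht.2 (by exact_mod_cast hnm)
    have hFtendsto : ∀ x : ℝ, Tendsto (fun n : ℕ => F n x) atTop (nhds (f x)) := by
      intro x
      refine tendsto_atTop_of_eventually_const (i₀ := Nat.ceil |x|) fun n hn => ?_
      exact hFeq n x (le_trans (Nat.le_ceil _) (Nat.cast_le.2 hn))
    have hFcont : ∀ n : ℕ, Continuous (F n) := fun n =>
      (hFconv n).locallyLipschitz.continuous
    have hFint : ∀ (n : ℕ) (mu : Measure ℝ) [IsFiniteMeasure mu],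
        Integrable (fun x => x) mu → Integrable f mu → Integrable (F n) mu := by
      intro n mu _ hid hfmu
      refine Integrable.mono' (g := fun x => |f x| + |f 0 + Stmt7Aux.rd f 0 * x|)
        (hfmu.abs.add (Stmt7Aux.integrable_affine hid (f 0) (Stmt7Aux.rd f 0)).abs)
        (hFcont n).aestronglyMeasurable (ae_of_all _ fun x => ?_)
      rw [Real.norm_eq_abs, abs_le]
      beta_reduce
      constructor
      · have h := hFge n x 0 (h0mem n)
        have h2 : f 0 + Stmt7Aux.rd f 0 * (x - 0) = f 0 + Stmt7Aux.rd f 0 * x := by ring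
        rw [h2] at h
        have := neg_abs_le (f 0 + Stmt7Aux.rd f 0 * x)
        have := abs_nonneg (f x)
        linarith
      · have h := hFle n x
        have := le_abs_self (f x)
        have := abs_nonneg (f 0 + Stmt7Aux.rd f 0 * x)
        linarith
    have hFcomp : ∀ n : ℕ, ∫ x, F n x ∂eta ≤ ∫ x, F n x ∂chi := by
      intro n
      refine Stmt7Aux.stage2 eta chi hinte hintc hmassR hmean hcpot (hFconv n)
        (hFint n eta hinte hfe) (hFint n chi hintc hfc)
        (c := -(n:ℝ)) (d := (n:ℝ))
        (σm := Stmt7Aux.rd f (-(n:ℝ))) (βm := f (-(n:ℝ)) + Stmt7Aux.rd f (-(n:ℝ)) * (n:ℝ))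
        (σp := Stmt7Aux.rd f (n:ℝ)) (βp := f (n:ℝ) - Stmt7Aux.rd f (n:ℝ) * (n:ℝ)) ?_ ?_
      · intro x hx
        rw [hFtailL n x hx]
        ring
      · intro x hx
        rw [hFtailR n x hx]
        ring
    have hte : Tendsto (fun n : ℕ => ∫ x, F n x ∂eta) atTop (nhds (∫ x, f x ∂eta)) :=
      integral_tendsto_of_tendsto_of_monotone (fun n => hFint n eta hinte hfe) hfe
        (ae_of_all _ hFmono) (ae_of_all _ hFtendsto)
    have htc : Tendsto (fun n : ℕ => ∫ x, F n x ∂chi) atTop (nhds (∫ x, f x ∂chi)) :=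
      integral_tendsto_of_tendsto_of_monotone (fun n => hFint n chi hintc hfc) hfc
        (ae_of_all _ hFmono) (ae_of_all _ hFtendsto)
    exact le_of_tendsto_of_tendsto' hte htc hFcomp
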